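/- Let x be a positive solution of the delay differential equation and set v(t) := V(x(t)). If t > τ and r ≥ 0 are such that v(s) ≤ r for all s ∈ [t−τ, t] and v'(t) ≥ 0, then v(t) ≤ F*(t, r). -/

import Mathlib

open Filter Set RealInnerProductSpace

/-- F(t,x,y) = ⟨∇V(x), f(t,x,y)⟩ + a(t)·V(x). -/
noncomputable def Ffun (N : ℕ)
    (f : ℝ → EuclideanSpace ℝ (Fin N) → EuclideanSpace ℝ (Fin N) → EuclideanSpace ℝ (Fin N))
    (V : EuclideanSpace ℝ (Fin N) → ℝ) (a : ℝ → ℝ)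
    (t : ℝ) (u v : EuclideanSpace ℝ (Fin N)) : ℝ :=
  ⟪gradient V u, f t u v⟫ + a t * V u

/-- The set of values F(t,x,y)/a(t) over nonnegative x, y with V(x), V(y) ≤ r. -/
def FstarSet (N : ℕ)
    (f : ℝ → EuclideanSpace ℝ (Fin N) → EuclideanSpace ℝ (Fin N) → EuclideanSpace ℝ (Fin N))
    (V : EuclideanSpace ℝ (Fin N) → ℝ) (a : ℝ → ℝ) (t r : ℝ) : Set ℝ :=
  {z | ∃ u v : EuclideanSpace ℝ (Fin N), (∀ i, 0 ≤ u i) ∧ (∀ i, 0 ≤ v i) ∧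
    V u ≤ r ∧ V v ≤ r ∧ z = Ffun N f V a t u v / a t}

/-- F*(t,r) = sup { F(t,x,y)/a(t) : x, y ≥ 0, V(x) ≤ r, V(y) ≤ r }. -/
noncomputable def Fstar (N : ℕ)
    (f : ℝ → EuclideanSpace ℝ (Fin N) → EuclideanSpace ℝ (Fin N) → EuclideanSpace ℝ (Fin N))
    (V : EuclideanSpace ℝ (Fin N) → ℝ) (a : ℝ → ℝ) (t r : ℝ) : ℝ :=
  sSup (FstarSet N f V a t r)

/-- if v(s) = V(x(s)) ≤ r on [t−τ, t] and v'(t) ≥ 0, then v(t) ≤ F*(t,r). -/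
theorem value_bounded_by_Fstar
(N : ℕ) (hN : 1 ≤ N) (τ : ℝ) (hτ : 0 < τ)
    (f : ℝ → EuclideanSpace ℝ (Fin N) → EuclideanSpace ℝ (Fin N) → EuclideanSpace ℝ (Fin N))
    (hf : ContinuousOn
      (fun p : ℝ × EuclideanSpace ℝ (Fin N) × EuclideanSpace ℝ (Fin N) => f p.1 p.2.1 p.2.2)
      {p | 0 ≤ p.1 ∧ (∀ j, 0 ≤ p.2.1 j) ∧ (∀ j, 0 ≤ p.2.2 j)})
    (V : EuclideanSpace ℝ (Fin N) → ℝ)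
    (hVC1 : ContDiff ℝ 1 V) (hV0 : V 0 = 0) (hVnn : ∀ u, 0 ≤ V u)
    (hVpos : ∀ u : EuclideanSpace ℝ (Fin N), (∀ i, 0 ≤ u i) → u ≠ 0 → 0 < V u)
    (hVtend : Tendsto V (nhds 0) (nhds 0))
    (a : ℝ → ℝ) (hac : ContinuousOn a (Ici 0)) (hapos : ∀ t, 0 ≤ t → 0 < a t)
(x : ℝ → EuclideanSpace ℝ (Fin N))
    (hxc : ContinuousOn x (Ici (-τ)))
    (hxpos : ∀ t, -τ ≤ t → ∀ j, 0 < x t j)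
    (hxde : ∀ t, 0 < t → HasDerivAt x (f t (x t) (x (t - τ))) t)
    (t r : ℝ) (ht : τ < t) (hr : 0 ≤ r)
    (hbdd : BddAbove (FstarSet N f V a t r))
    (hvr : ∀ s ∈ Icc (t - τ) t, V (x s) ≤ r)
    (hv' : 0 ≤ deriv (fun s => V (x s)) t) :
    V (x t) ≤ Fstar N f V a t r := by
  have ht0 : 0 < t := hτ.trans ht
  have hderiv : HasDerivAt (fun s => V (x s))
      (⟪gradient V (x t), f t (x t) (x (t - τ))⟫) t := by
    have hVd : DifferentiableAt ℝ V (x t) := (hVC1.differentiable one_ne_zero).differentiableAt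
    have hg := hVd.hasGradientAt
    have hF := hg.hasFDerivAt
    have := hF.comp_hasDerivAt t (hxde t ht0)
    simpa [InnerProductSpace.toDual_apply_apply, Function.comp_def] using this
  have hd : deriv (fun s => V (x s)) t = ⟪gradient V (x t), f t (x t) (x (t - τ))⟫ :=
    hderiv.deriv
  have hat : 0 < a t := hapos t ht0.le
  have hmem : (Ffun N f V a t (x t) (x (t - τ))) / a t ∈ FstarSet N f V a t r := by
    refine ⟨x t, x (t - τ), ?_, ?_, ?_, ?_, rfl⟩
    · exact fun i => (hxpos t (by linarith) i).le
    · exact fun i => (hxpos (t - τ) (by linarith) i).le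
    · exact hvr t ⟨by linarith, le_rfl⟩
    · exact hvr (t - τ) ⟨le_rfl, by linarith⟩
  have hle : V (x t) ≤ Ffun N f V a t (x t) (x (t - τ)) / a t := by
    rw [le_div_iff₀ hat, Ffun]
    have : 0 ≤ ⟪gradient V (x t), f t (x t) (x (t - τ))⟫ := by rw [← hd]; exact hv'
    nlinarith [this]
  exact hle.trans (le_csSup hbdd hmem)
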